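/- Let S be a nonnegative integrable random variable on a probability space with m := 1 − E[S] satisfying 0 ≤ m < 1, and fix T > 0. Then for every x ∈ ℝ there exists a unique σ ∈ [0,∞) such that P_BS(x,σ) = E[(e^x − S)₊]; that is, the Put-implied volatility I_S^p(x) is well defined on the whole real line. -/

import Mathlib

open MeasureTheory Filter
open Topology

/-- Standard normal cumulative distribution function. -/
noncomputable def stdNormalCDF (y : ℝ) : ℝ :=
  ∫ t in Set.Iic y, Real.exp (-t ^ 2 / 2) / Real.sqrt (2 * Real.pi)

/-- Black-Scholes d₊ (maturity `T`, log-strike `x`, volatility `σ`). -/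
noncomputable def dplus (T x σ : ℝ) : ℝ := -x / (σ * Real.sqrt T) + σ * Real.sqrt T / 2

/-- Black-Scholes d₋ (maturity `T`, log-strike `x`, volatility `σ`). -/
noncomputable def dminus (T x σ : ℝ) : ℝ := -x / (σ * Real.sqrt T) - σ * Real.sqrt T / 2

/-- Black-Scholes Call price (maturity `T`, log-strike `x`, volatility `σ`),
with the convention `CBS T x 0 = max (1 - exp x) 0`. -/
noncomputable def CBS (T x σ : ℝ) : ℝ :=
  if σ = 0 then max (1 - Real.exp x) 0
  else stdNormalCDF (dplus T x σ) - Real.exp x * stdNormalCDF (dminus T x σ)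

/-- Black-Scholes Put price (maturity `T`, log-strike `x`, volatility `σ`),
with the convention `PBS T x 0 = max (exp x - 1) 0`. -/
noncomputable def PBS (T x σ : ℝ) : ℝ :=
  if σ = 0 then max (Real.exp x - 1) 0
  else Real.exp x * stdNormalCDF (-dminus T x σ) - stdNormalCDF (-dplus T x σ)


noncomputable def stdNormalPDF (t : ℝ) : ℝ := Real.exp (-t ^ 2 / 2) / Real.sqrt (2 * Real.pi)

lemma stdNormalPDF_pos (t : ℝ) : 0 < stdNormalPDF t := by
  unfold stdNormalPDF
  positivity

lemma stdNormalPDF_neg (t : ℝ) : stdNormalPDF (-t) = stdNormalPDF t := by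
  simp [stdNormalPDF]

lemma integrable_stdNormalPDF : Integrable stdNormalPDF := by
  have h : Integrable (fun t : ℝ => Real.exp (-(1/2) * t ^ 2)) :=
    integrable_exp_neg_mul_sq (by norm_num)
  have := h.div_const (Real.sqrt (2 * Real.pi))
  refine this.congr (Filter.Eventually.of_forall fun t => ?_)
  simp [stdNormalPDF]
  ring_nf

lemma integral_stdNormalPDF : ∫ t, stdNormalPDF t = 1 := by
  have h : ∫ t : ℝ, Real.exp (-(1/2) * t ^ 2) = Real.sqrt (Real.pi / (1/2)) :=
    integral_gaussian (1/2)
  have h2 : ∫ t, stdNormalPDF t = (∫ t : ℝ, Real.exp (-(1/2) * t ^ 2)) / Real.sqrt (2 * Real.pi) := by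
    rw [← integral_div]
    congr 1; ext t; simp [stdNormalPDF]; ring_nf
  rw [h2, h]
  rw [div_eq_one_iff_eq (by positivity)]
  congr 1
  ring

lemma cdf_sub (y : ℝ) : stdNormalCDF y = stdNormalCDF 0 + ∫ t in (0:ℝ)..y, stdNormalPDF t := by
  have := intervalIntegral.integral_Iic_sub_Iic
    (integrable_stdNormalPDF.integrableOn (s := Set.Iic (0:ℝ)))
    (integrable_stdNormalPDF.integrableOn (s := Set.Iic y))
  unfold stdNormalCDF stdNormalPDF at *
  linarith [this]

lemma hasDerivAt_stdNormalCDF (y : ℝ) : HasDerivAt stdNormalCDF (stdNormalPDF y) y := by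
  have hc : Continuous stdNormalPDF := by
    unfold stdNormalPDF; fun_prop
  have h : HasDerivAt (fun u => ∫ t in (0:ℝ)..u, stdNormalPDF t) (stdNormalPDF y) y :=
    intervalIntegral.integral_hasDerivAt_right
      integrable_stdNormalPDF.intervalIntegrable
      (hc.stronglyMeasurableAtFilter _ _) hc.continuousAt
  have h2 := (h.const_add (stdNormalCDF 0))
  refine h2.congr_of_eventuallyEq (Filter.Eventually.of_forall fun u => (cdf_sub u))

lemma continuous_stdNormalCDF : Continuous stdNormalCDF :=
  continuous_iff_continuousAt.2 fun y => (hasDerivAt_stdNormalCDF y).continuousAt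

lemma stdNormalCDF_eq (y : ℝ) : stdNormalCDF y = ∫ t in Set.Iic y, stdNormalPDF t := rfl

lemma tendsto_stdNormalCDF_atTop : Tendsto stdNormalCDF atTop (𝓝 1) := by
  have h := tendsto_setIntegral_of_monotone (μ := (volume : Measure ℝ))
    (s := fun y : ℝ => Set.Iic y) (f := stdNormalPDF)
    (fun i => measurableSet_Iic) (fun a b hab => Set.Iic_subset_Iic.2 hab)
    (by rw [Set.iUnion_Iic]; exact integrable_stdNormalPDF.integrableOn)
  rw [Set.iUnion_Iic, Measure.restrict_univ] at h
  rw [integral_stdNormalPDF] at h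
  exact h

lemma tendsto_stdNormalCDF_atBot : Tendsto stdNormalCDF atBot (𝓝 0) := by
  have h := tendsto_setIntegral_of_antitone (μ := (volume : Measure ℝ))
    (s := fun y : ℝ => Set.Iic (-y)) (f := stdNormalPDF)
    (fun i => measurableSet_Iic)
    (fun a b hab => Set.Iic_subset_Iic.2 (by linarith))
    ⟨0, integrable_stdNormalPDF.integrableOn⟩
  have he : ⋂ y : ℝ, Set.Iic (-y) = ∅ := by
    ext t
    simp only [Set.mem_iInter, Set.mem_Iic, Set.mem_empty_iff_false, iff_false, not_forall]
    exact ⟨-t + 1, by push_neg; linarith⟩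
  rw [he] at h
  simp only [Measure.restrict_empty, integral_zero_measure] at h
  have h2 : Tendsto (fun y : ℝ => stdNormalCDF (- (-y))) atBot (𝓝 0) :=
    h.comp tendsto_neg_atBot_atTop
  simpa using h2


lemma key_identity {T x σ : ℝ} (hT : 0 < T) (hσ : σ ≠ 0) :
    Real.exp x * stdNormalPDF (dminus T x σ) = stdNormalPDF (dplus T x σ) := by
  have hs : Real.sqrt T ≠ 0 := ne_of_gt (Real.sqrt_pos.2 hT)
  unfold stdNormalPDF dminus dplus
  rw [mul_div_assoc', ← Real.exp_add]
  congr 2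
  field_simp
  ring

lemma hasDerivAt_dplus {T x σ : ℝ} (hT : 0 < T) (hσ : σ ≠ 0) :
    HasDerivAt (fun σ => dplus T x σ) (x / (Real.sqrt T * σ ^ 2) + Real.sqrt T / 2) σ := by
  set s := Real.sqrt T with hs
  have hs0 : 0 < s := Real.sqrt_pos.2 hT
  have h1 : HasDerivAt (fun σ : ℝ => σ * s) s σ := by
    simpa using (hasDerivAt_id σ).mul_const s
  have h2 : HasDerivAt (fun σ : ℝ => (σ * s)⁻¹) (-s / (σ * s) ^ 2) σ :=
    h1.inv (mul_ne_zero hσ (ne_of_gt hs0))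
  have h3 := (h2.const_mul (-x)).add (((hasDerivAt_id σ).mul_const s).div_const 2)
  have heq : (fun σ => dplus T x σ) = fun σ : ℝ => -x * (σ * s)⁻¹ + σ * s / 2 := by
    funext u; unfold dplus; rw [← hs, div_eq_mul_inv]
  rw [heq]
  refine h3.congr_deriv ?_
  field_simp

lemma hasDerivAt_dminus {T x σ : ℝ} (hT : 0 < T) (hσ : σ ≠ 0) :
    HasDerivAt (fun σ => dminus T x σ) (x / (Real.sqrt T * σ ^ 2) - Real.sqrt T / 2) σ := by
  set s := Real.sqrt T with hs
  have hs0 : 0 < s := Real.sqrt_pos.2 hT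
  have h1 : HasDerivAt (fun σ : ℝ => σ * s) s σ := by
    simpa using (hasDerivAt_id σ).mul_const s
  have h2 : HasDerivAt (fun σ : ℝ => (σ * s)⁻¹) (-s / (σ * s) ^ 2) σ :=
    h1.inv (mul_ne_zero hσ (ne_of_gt hs0))
  have h3 := (h2.const_mul (-x)).sub (((hasDerivAt_id σ).mul_const s).div_const 2)
  have heq : (fun σ => dminus T x σ) = fun σ : ℝ => -x * (σ * s)⁻¹ - σ * s / 2 := by
    funext u; unfold dminus; rw [← hs, div_eq_mul_inv]
  rw [heq]
  refine h3.congr_deriv ?_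
  field_simp

lemma hasDerivAt_put {T x σ : ℝ} (hT : 0 < T) (hσ : 0 < σ) :
    HasDerivAt (fun σ => Real.exp x * stdNormalCDF (-dminus T x σ) - stdNormalCDF (-dplus T x σ))
      (Real.sqrt T * stdNormalPDF (dplus T x σ)) σ := by
  set s := Real.sqrt T with hs
  have hs0 : 0 < s := Real.sqrt_pos.2 hT
  have hσ0 : σ ≠ 0 := ne_of_gt hσ
  have hdp := hasDerivAt_dplus (x := x) hT hσ0
  have hdm := hasDerivAt_dminus (x := x) hT hσ0
  have h1 : HasDerivAt (fun σ => stdNormalCDF (-dminus T x σ))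
      (stdNormalPDF (-dminus T x σ) * (-(x / (s * σ ^ 2) - s / 2))) σ :=
    (hasDerivAt_stdNormalCDF _).comp σ hdm.neg
  have h2 : HasDerivAt (fun σ => stdNormalCDF (-dplus T x σ))
      (stdNormalPDF (-dplus T x σ) * (-(x / (s * σ ^ 2) + s / 2))) σ :=
    (hasDerivAt_stdNormalCDF _).comp σ hdp.neg
  have h3 := (h1.const_mul (Real.exp x)).sub h2
  refine h3.congr_deriv ?_
  rw [stdNormalPDF_neg, stdNormalPDF_neg, ← key_identity (x := x) (σ := σ) hT hσ0]
  ring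

lemma PBS_ne_zero (T x : ℝ) {σ : ℝ} (hσ : σ ≠ 0) :
    PBS T x σ = Real.exp x * stdNormalCDF (-dminus T x σ) - stdNormalCDF (-dplus T x σ) :=
  if_neg hσ

lemma hasDerivAt_PBS {T x σ : ℝ} (hT : 0 < T) (hσ : 0 < σ) :
    HasDerivAt (PBS T x) (Real.sqrt T * stdNormalPDF (dplus T x σ)) σ := by
  refine (hasDerivAt_put hT hσ).congr_of_eventuallyEq ?_
  filter_upwards [Ioi_mem_nhds hσ] with u hu
  exact PBS_ne_zero T x (ne_of_gt hu)

lemma neg_dminus_eq (T x : ℝ) :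
    (fun σ : ℝ => -dminus T x σ) = fun σ => x * (σ * Real.sqrt T)⁻¹ + σ * Real.sqrt T / 2 := by
  funext u; unfold dminus; ring

lemma neg_dplus_eq (T x : ℝ) :
    (fun σ : ℝ => -dplus T x σ) = fun σ => x * (σ * Real.sqrt T)⁻¹ - σ * Real.sqrt T / 2 := by
  funext u; unfold dplus; ring

lemma tendsto_put_zero (T x : ℝ) (hT : 0 < T) :
    Tendsto (PBS T x) (𝓝[>] (0:ℝ)) (𝓝 (max (Real.exp x - 1) 0)) := by
  set s := Real.sqrt T with hs
  have hs0 : 0 < s := Real.sqrt_pos.2 hT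
  have heq : (fun σ : ℝ => Real.exp x * stdNormalCDF (-dminus T x σ) - stdNormalCDF (-dplus T x σ))
      =ᶠ[𝓝[>] (0:ℝ)] PBS T x := by
    filter_upwards [self_mem_nhdsWithin] with σ hσ
    exact (PBS_ne_zero T x (ne_of_gt hσ)).symm
  refine Tendsto.congr' heq ?_
  have hms : Tendsto (fun σ : ℝ => σ * s) (𝓝[>] (0:ℝ)) (𝓝[>] (0:ℝ)) := by
    rw [tendsto_nhdsWithin_iff]
    constructor
    · have : Tendsto (fun σ : ℝ => σ * s) (𝓝 0) (𝓝 (0 * s)) :=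
        (continuous_id.mul continuous_const).tendsto 0
      simpa using this.mono_left nhdsWithin_le_nhds
    · filter_upwards [self_mem_nhdsWithin] with σ hσ
      exact mul_pos hσ hs0
  have hinv : Tendsto (fun σ : ℝ => (σ * s)⁻¹) (𝓝[>] (0:ℝ)) atTop :=
    tendsto_inv_nhdsGT_zero.comp hms
  have hhalf : Tendsto (fun σ : ℝ => σ * s / 2) (𝓝[>] (0:ℝ)) (𝓝 0) := by
    have : Tendsto (fun σ : ℝ => σ * s / 2) (𝓝 0) (𝓝 (0 * s / 2)) :=
      ((continuous_id.mul continuous_const).div_const 2).tendsto 0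
    simpa using this.mono_left nhdsWithin_le_nhds
  rcases lt_trichotomy x 0 with hx | hx | hx
  · -- x < 0 : both CDFs tend to 0
    have hdm : Tendsto (fun σ : ℝ => -dminus T x σ) (𝓝[>] (0:ℝ)) atBot := by
      rw [neg_dminus_eq, ← hs]
      exact ((hinv.const_mul_atTop_of_neg hx).atBot_add hhalf)
    have hdp : Tendsto (fun σ : ℝ => -dplus T x σ) (𝓝[>] (0:ℝ)) atBot := by
      rw [neg_dplus_eq, ← hs]
      exact ((hinv.const_mul_atTop_of_neg hx).atBot_add hhalf.neg)
    have h1 := tendsto_stdNormalCDF_atBot.comp hdm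
    have h2 := tendsto_stdNormalCDF_atBot.comp hdp
    have h3 := ((h1.const_mul (Real.exp x)).sub h2)
    have hmax : max (Real.exp x - 1) 0 = 0 :=
      max_eq_right (by linarith [Real.exp_lt_one_iff.mpr hx])
    rw [hmax]
    simpa using h3
  · -- x = 0
    subst hx
    have hdm : ∀ u : ℝ, -dminus T 0 u = u * s / 2 := by
      intro u; unfold dminus; rw [← hs]; ring_nf
    have hdp : ∀ u : ℝ, -dplus T 0 u = -(u * s / 2) := by
      intro u; unfold dplus; rw [← hs]; ring_nf
    have hc : Tendsto (fun σ : ℝ => Real.exp 0 * stdNormalCDF (σ * s / 2)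
        - stdNormalCDF (-(σ * s / 2))) (𝓝 0)
        (𝓝 (Real.exp 0 * stdNormalCDF (0 * s / 2) - stdNormalCDF (-(0 * s / 2)))) := by
      apply Continuous.tendsto
      exact (continuous_const.mul (continuous_stdNormalCDF.comp (by fun_prop))).sub
        (continuous_stdNormalCDF.comp (by fun_prop))
    simp only [hdm, hdp]
    simp only [zero_mul, zero_div, neg_zero, Real.exp_zero, one_mul, sub_self] at hc
    simpa using hc.mono_left nhdsWithin_le_nhds
  · -- x > 0 : both CDFs tend to 1
    have hdm : Tendsto (fun σ : ℝ => -dminus T x σ) (𝓝[>] (0:ℝ)) atTop := by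
      rw [neg_dminus_eq, ← hs]
      exact ((hinv.const_mul_atTop hx).atTop_add hhalf)
    have hdp : Tendsto (fun σ : ℝ => -dplus T x σ) (𝓝[>] (0:ℝ)) atTop := by
      rw [neg_dplus_eq, ← hs]
      exact ((hinv.const_mul_atTop hx).atTop_add hhalf.neg)
    have h1 := tendsto_stdNormalCDF_atTop.comp hdm
    have h2 := tendsto_stdNormalCDF_atTop.comp hdp
    have h3 := ((h1.const_mul (Real.exp x)).sub h2)
    have hmax : max (Real.exp x - 1) 0 = Real.exp x - 1 :=
      max_eq_left (by linarith [Real.one_lt_exp_iff.mpr hx])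
    rw [hmax]
    simpa using h3

lemma tendsto_put_atTop (T x : ℝ) (hT : 0 < T) :
    Tendsto (PBS T x) atTop (𝓝 (Real.exp x)) := by
  set s := Real.sqrt T with hs
  have hs0 : 0 < s := Real.sqrt_pos.2 hT
  have heq : (fun σ : ℝ => Real.exp x * stdNormalCDF (-dminus T x σ) - stdNormalCDF (-dplus T x σ))
      =ᶠ[atTop] PBS T x := by
    filter_upwards [eventually_gt_atTop (0:ℝ)] with σ hσ
    exact (PBS_ne_zero T x (ne_of_gt hσ)).symm
  refine Tendsto.congr' heq ?_
  have hms : Tendsto (fun σ : ℝ => σ * s) atTop atTop :=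
    Tendsto.atTop_mul_const hs0 tendsto_id
  have hinv : Tendsto (fun σ : ℝ => x * (σ * s)⁻¹) atTop (𝓝 0) := by
    have := (tendsto_inv_atTop_zero.comp hms).const_mul x
    simpa using this
  have hhalf : Tendsto (fun σ : ℝ => σ * s / 2) atTop atTop := hms.atTop_div_const two_pos
  have hdm : Tendsto (fun σ : ℝ => -dminus T x σ) atTop atTop := by
    rw [neg_dminus_eq, ← hs]
    exact hinv.add_atTop hhalf
  have hdp : Tendsto (fun σ : ℝ => -dplus T x σ) atTop atBot := by
    rw [neg_dplus_eq, ← hs]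
    have : Tendsto (fun σ : ℝ => -(σ * s / 2)) atTop atBot := tendsto_neg_atBot_iff.mpr hhalf
    simpa [sub_eq_add_neg] using hinv.add_atBot this
  have h1 := tendsto_stdNormalCDF_atTop.comp hdm
  have h2 := tendsto_stdNormalCDF_atBot.comp hdp
  have h3 := (h1.const_mul (Real.exp x)).sub h2
  simpa using h3

lemma put_continuousOn (T x : ℝ) (hT : 0 < T) : ContinuousOn (PBS T x) (Set.Ici 0) := by
  intro σ hσ
  rcases eq_or_lt_of_le (show (0:ℝ) ≤ σ from hσ) with h0 | h0
  · subst h0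
    rw [ContinuousWithinAt]
    have hset : (𝓝[Set.Ici (0:ℝ)] 0) = pure 0 ⊔ 𝓝[>] (0:ℝ) := by
      rw [← Set.Ioi_insert, nhdsWithin_insert]
    rw [hset, tendsto_sup]
    refine ⟨tendsto_pure_nhds _ 0, ?_⟩
    have h := tendsto_put_zero T x hT
    have h0' : PBS T x 0 = max (Real.exp x - 1) 0 := if_pos rfl
    rw [h0']
    exact h
  · exact ((hasDerivAt_PBS hT h0).continuousAt).continuousWithinAt

lemma put_strictMonoOn (T x : ℝ) (hT : 0 < T) : StrictMonoOn (PBS T x) (Set.Ici 0) := by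
  refine strictMonoOn_of_deriv_pos (convex_Ici 0) (put_continuousOn T x hT) ?_
  intro σ hσ
  rw [interior_Ici] at hσ
  rw [(hasDerivAt_PBS hT hσ).deriv]
  exact mul_pos (Real.sqrt_pos.2 hT) (stdNormalPDF_pos _)


/-- the Put-implied volatility is well defined on the whole real line. -/
theorem put_implied_volatility_exists_unique
    {Ω : Type*} [MeasurableSpace Ω] (μ : Measure Ω) [IsProbabilityMeasure μ]
    (S : Ω → ℝ) (hS : ∀ ω, 0 ≤ S ω) (hSint : Integrable S μ)
    (m : ℝ) (hm : m = 1 - ∫ ω, S ω ∂μ) (hm0 : 0 ≤ m) (hm1 : m < 1)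
    (T : ℝ) (hT : 0 < T) (x : ℝ) :
    ∃! σ : ℝ, 0 ≤ σ ∧ PBS T x σ = ∫ ω, max (Real.exp x - S ω) 0 ∂μ := by
  set p : ℝ := ∫ ω, max (Real.exp x - S ω) 0 ∂μ with hp
  have hIntMax : Integrable (fun ω => max (Real.exp x - S ω) 0) μ :=
    ((integrable_const (Real.exp x)).sub hSint).pos_part
  have hES : ∫ ω, S ω ∂μ = 1 - m := by linarith
  have hconst : ∫ _ : Ω, Real.exp x ∂μ = Real.exp x := by
    simp [integral_const]
  have hp_low1 : Real.exp x - 1 ≤ p := by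
    have hmono := integral_mono ((integrable_const (Real.exp x)).sub hSint) hIntMax
      (fun ω => le_max_left _ _)
    simp only [Pi.sub_apply] at hmono
    rw [integral_sub (integrable_const _) hSint, hconst, hES] at hmono
    linarith
  have hp_low2 : (0:ℝ) ≤ p := integral_nonneg fun ω => le_max_right _ _
  have hp0 : PBS T x 0 ≤ p := by
    have : PBS T x 0 = max (Real.exp x - 1) 0 := if_pos rfl
    rw [this]
    exact max_le hp_low1 hp_low2
  -- strict upper bound
  have hpt : ∀ ω, max (Real.exp x - S ω) 0 = Real.exp x - min (S ω) (Real.exp x) := by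
    intro ω
    rcases le_total (S ω) (Real.exp x) with h | h
    · rw [min_eq_left h, max_eq_left (by linarith)]
    · rw [min_eq_right h, max_eq_right (by linarith)]
      ring
  have hIntMin : Integrable (fun ω => min (S ω) (Real.exp x)) μ := by
    have heq : (fun ω => min (S ω) (Real.exp x))
        = fun ω => Real.exp x - max (Real.exp x - S ω) 0 := by
      funext ω; rw [hpt ω]; ring
    rw [heq]
    exact (integrable_const _).sub hIntMax
  have hpq : p = Real.exp x - ∫ ω, min (S ω) (Real.exp x) ∂μ := by
    have : p = ∫ ω, (Real.exp x - min (S ω) (Real.exp x)) ∂μ := by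
      rw [hp]
      exact integral_congr_ae (Filter.Eventually.of_forall fun ω => hpt ω)
    rw [this, integral_sub (integrable_const _) hIntMin, hconst]
  have hq_pos : 0 < ∫ ω, min (S ω) (Real.exp x) ∂μ := by
    have hq_nonneg : 0 ≤ ∫ ω, min (S ω) (Real.exp x) ∂μ :=
      integral_nonneg fun ω => le_min (hS ω) (Real.exp_pos x).le
    rcases hq_nonneg.lt_or_eq with h | h
    · exact h
    · exfalso
      have hzero : (fun ω => min (S ω) (Real.exp x)) =ᵐ[μ] 0 :=
        (integral_eq_zero_iff_of_nonneg (fun ω => le_min (hS ω) (Real.exp_pos x).le)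
          hIntMin).1 h.symm
      have hSzero : S =ᵐ[μ] 0 := by
        filter_upwards [hzero] with ω hω
        simp only [Pi.zero_apply] at hω ⊢
        rcases le_total (S ω) (Real.exp x) with h' | h'
        · rwa [min_eq_left h'] at hω
        · rw [min_eq_right h'] at hω
          exact absurd hω (ne_of_gt (Real.exp_pos x))
      have : ∫ ω, S ω ∂μ = 0 := by
        rw [integral_congr_ae hSzero]; simp
      rw [this] at hES
      linarith
  have hpe : p < Real.exp x := by rw [hpq]; linarith
  -- existence via IVT
  have hlim := tendsto_put_atTop T x hT
  have hev : ∀ᶠ b in atTop, p < PBS T x b := hlim.eventually (eventually_gt_nhds hpe)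
  obtain ⟨b, hbp, hb0⟩ := (hev.and (eventually_ge_atTop (0:ℝ))).exists
  have hIVT := intermediate_value_Icc hb0 ((put_continuousOn T x hT).mono
    (Set.Icc_subset_Ici_self))
  obtain ⟨σ, hσmem, hσeq⟩ := hIVT ⟨hp0, hbp.le⟩
  refine ⟨σ, ⟨hσmem.1, hσeq⟩, ?_⟩
  rintro τ ⟨hτ0, hτeq⟩
  exact (put_strictMonoOn T x hT).injOn hτ0 hσmem.1 (hτeq.trans hσeq.symm)
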